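/- arXiv:2508.01797 — 2 statements merged into one kernel-verified Lean document; each statement's English description precedes it below -/
import Mathlib

section
/- Let n ≥ 2. Consider the polynomial ring ℚ[a, b, z₁, …, z_{n−1}] and, with the convention z₀ = 1, the n + 1 polynomials g₁ = a + b + z₁, g_k = a·b·z_{k−2} + (a + b)·z_{k−1} + z_k for 2 ≤ k ≤ n − 1, g_n = a·b·z_{n−2} + (a + b)·z_{n−1}, and g_{n+1} = a·b·z_{n−1}. Then the quotient ℚ-algebra ℚ[a, b, z₁, …, z_{n−1}] / (g₁, …, g_{n+1}) is isomorphic, as a ℚ-algebra, to ℚ[a, b] / (h_n(a,b), a·b·h_{n−1}(a,b)), via the map induced by a ↦ a, b ↦ b, and z_k ↦ (−1)^k · h_k(a, b) for 1 ≤ k ≤ n − 1. (This is the algebraic content of the computation, via successive changes of variables and cancellation of acyclic ideals, of the rational cohomology algebra of U(n+1)/(U(1) × U(1) × U(n−1)).) -/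
open MvPolynomial

/-- The complete homogeneous polynomial `h_k(X, Y) = ∑_{i=0}^{k} X^{k-i} Y^i` in `ℚ[X, Y]`. -/
noncomputable def hpoly (k : ℕ) : MvPolynomial (Fin 2) ℚ :=
  ∑ i ∈ Finset.range (k + 1), X 0 ^ (k - i) * X 1 ^ i

lemma hpoly_zero : hpoly 0 = 1 := by simp [hpoly]
lemma hpoly_one : hpoly 1 = X 0 + X 1 := by simp [hpoly, Finset.sum_range_succ]
lemma hpoly_succ (k : ℕ) : hpoly (k + 1) = X 0 * hpoly k + X 1 ^ (k + 1) := by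
  rw [hpoly, hpoly, Finset.sum_range_succ, Finset.mul_sum]
  simp only [Nat.sub_self, pow_zero, one_mul]
  congr 1
  refine Finset.sum_congr rfl fun i hi => ?_
  rw [Finset.mem_range] at hi
  rw [show k + 1 - i = (k - i) + 1 by omega, pow_succ]
  ring
lemma hpoly_rec (k : ℕ) :
    hpoly (k + 2) + X 0 * X 1 * hpoly k = (X 0 + X 1) * hpoly (k + 1) := by
  linear_combination hpoly_succ (k + 1) - (X 1 : MvPolynomial (Fin 2) ℚ) * hpoly_succ k
noncomputable def fmap (m : ℕ) : Fin (m + 2 + 1) → MvPolynomial (Fin 2) ℚ :=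
  fun i => if i.1 = 0 then X 0 else if i.1 = 1 then X 1
    else C ((-1 : ℚ) ^ (i.1 - 1)) * hpoly (i.1 - 1)
noncomputable def phi (m : ℕ) : MvPolynomial (Fin (m + 2 + 1)) ℚ →ₐ[ℚ] MvPolynomial (Fin 2) ℚ :=
  aeval (fmap m)
noncomputable def iot (m : ℕ) : MvPolynomial (Fin 2) ℚ →ₐ[ℚ] MvPolynomial (Fin (m + 2 + 1)) ℚ :=
  aeval ![X 0, X 1]
lemma iot_X0 (m : ℕ) : iot m (X 0) = X 0 := by simp [iot]
lemma iot_X1 (m : ℕ) : iot m (X 1) = X 1 := by simp [iot]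
lemma iot_C (m : ℕ) (a : ℚ) : iot m (C a) = C a := by simp [iot]
lemma phi_X0 (m : ℕ) : phi m (X 0) = X 0 := by simp [phi, fmap]
lemma phi_X1 (m : ℕ) : phi m (X 1) = X 1 := by simp [phi, fmap]
lemma phi_Xk (m k : ℕ) (hk : 1 ≤ k) (h : k + 1 < m + 2 + 1) :
    phi m (X ⟨k + 1, h⟩) = C ((-1 : ℚ) ^ k) * hpoly k := by
  rw [phi, aeval_X, fmap]
  rw [if_neg (show ¬(k + 1 = 0) by omega), if_neg (show ¬(k + 1 = 1) by omega)]
  simp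
lemma phi_iot (m : ℕ) (p : MvPolynomial (Fin 2) ℚ) : phi m (iot m p) = p := by
  have : (phi m).comp (iot m) = AlgHom.id ℚ _ := by
    apply MvPolynomial.algHom_ext
    intro i
    fin_cases i <;> simp [iot, phi, fmap]
  calc phi m (iot m p) = ((phi m).comp (iot m)) p := rfl
    _ = p := by rw [this]; rfl


/-- Let `n ≥ 2`.  In `ℚ[a, b, z₁, …, z_{n-1}]` (realized as `MvPolynomial (Fin (n+1)) ℚ`, with
`a = X 0`, `b = X 1`, and `z_k = X (k+1)` for `1 ≤ k ≤ n-1`, and the convention `z₀ = 1`),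
consider the polynomials
`g₁ = a + b + z₁`,
`g_k = a·b·z_{k-2} + (a+b)·z_{k-1} + z_k` for `2 ≤ k ≤ n-1`,
`g_n = a·b·z_{n-2} + (a+b)·z_{n-1}`, and
`g_{n+1} = a·b·z_{n-1}`.
Then the quotient `ℚ`-algebra `ℚ[a, b, z₁, …, z_{n-1}]/(g₁, …, g_{n+1})` is isomorphic, as a
`ℚ`-algebra, to `ℚ[a, b]/(h_n(a,b), a·b·h_{n-1}(a,b))`, via the map induced by `a ↦ a`,
`b ↦ b`, and `z_k ↦ (-1)^k · h_k(a, b)` for `1 ≤ k ≤ n-1`. -/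
theorem homogeneous_space_cohomology_presentation (n : ℕ) (hn : 2 ≤ n)
    (z : ℕ → MvPolynomial (Fin (n + 1)) ℚ)
    (hz0 : z 0 = 1)
    (hz : ∀ k : ℕ, 1 ≤ k → k ≤ n - 1 → ∀ hk : k + 1 < n + 1, z k = X ⟨k + 1, hk⟩)
    (g : ℕ → MvPolynomial (Fin (n + 1)) ℚ)
    (hg1 : g 1 = X 0 + X 1 + z 1)
    (hgk : ∀ k : ℕ, 2 ≤ k → k ≤ n - 1 →
      g k = X 0 * X 1 * z (k - 2) + (X 0 + X 1) * z (k - 1) + z k)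
    (hgn : g n = X 0 * X 1 * z (n - 2) + (X 0 + X 1) * z (n - 1))
    (hgn1 : g (n + 1) = X 0 * X 1 * z (n - 1)) :
    ∃ e : (MvPolynomial (Fin (n + 1)) ℚ ⧸ Ideal.span (g '' Set.Icc 1 (n + 1))) ≃ₐ[ℚ]
          (MvPolynomial (Fin 2) ℚ ⧸
            Ideal.span {hpoly n, (X 0 : MvPolynomial (Fin 2) ℚ) * X 1 * hpoly (n - 1)}),
      e (Ideal.Quotient.mk _ (X 0)) = Ideal.Quotient.mk _ (X 0) ∧
      e (Ideal.Quotient.mk _ (X 1)) = Ideal.Quotient.mk _ (X 1) ∧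
      ∀ k : ℕ, 1 ≤ k → k ≤ n - 1 →
        e (Ideal.Quotient.mk _ (z k)) =
          Ideal.Quotient.mk _ (C ((-1 : ℚ) ^ k) * hpoly k) := by
  obtain ⟨m, rfl⟩ : ∃ m, n = m + 2 := ⟨n - 2, by omega⟩
  clear hn
  simp only [show m + 2 - 1 = m + 1 from rfl, show m + 2 - 2 = m from rfl] at hgn hgn1 hz hgk ⊢
  set I : Ideal (MvPolynomial (Fin (m + 2 + 1)) ℚ) :=
    Ideal.span (g '' Set.Icc 1 (m + 2 + 1)) with hI
  set J : Ideal (MvPolynomial (Fin 2) ℚ) :=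
    Ideal.span {hpoly (m + 2), (X 0 : MvPolynomial (Fin 2) ℚ) * X 1 * hpoly (m + 1)} with hJ
  -- membership of generators
  have gmem : ∀ j : ℕ, 1 ≤ j → j ≤ m + 2 + 1 → g j ∈ I :=
    fun j h1 h2 => Ideal.subset_span ⟨j, Set.mem_Icc.2 ⟨h1, h2⟩, rfl⟩
  -- Hb facts
  have hHbrec : ∀ k, iot m (hpoly (k + 2)) + X 0 * X 1 * iot m (hpoly k)
      = (X 0 + X 1) * iot m (hpoly (k + 1)) := by
    intro k
    have := congrArg (iot m) (hpoly_rec k)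
    simpa only [map_add, map_mul, iot_X0, iot_X1] using this
  -- key: z k ≡ (-1)^k Hb k mod I
  have key : ∀ k, k ≤ m + 1 → z k - C ((-1 : ℚ) ^ k) * iot m (hpoly k) ∈ I := by
    intro k
    induction k using Nat.strong_induction_on with
    | _ k ih =>
      intro hk
      match k with
      | 0 =>
        have : z 0 - C ((-1 : ℚ) ^ 0) * iot m (hpoly 0) = 0 := by
          rw [hz0, hpoly_zero, map_one]; simp
        rw [this]; exact I.zero_mem
      | 1 =>
        have : z 1 - C ((-1 : ℚ) ^ 1) * iot m (hpoly 1) = g 1 := by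
          rw [hg1, hpoly_one, map_add, iot_X0, iot_X1]
          simp only [pow_one, map_neg, map_one]
          ring
        rw [this]; exact gmem 1 (by omega) (by omega)
      | (j + 2) =>
        have hg : g (j + 2) = X 0 * X 1 * z j + (X 0 + X 1) * z (j + 1) + z (j + 2) := by
          have := hgk (j + 2) (by omega) (by omega)
          simpa using this
        have ihj := ih j (by omega) (by omega)
        have ihj1 := ih (j + 1) (by omega) (by omega)
        have hrec := hHbrec j
        have e1 : ((-1 : ℚ)) ^ (j + 1) = -(-1 : ℚ) ^ j := by rw [pow_succ]; ring
        have e2 : ((-1 : ℚ)) ^ (j + 2) = (-1 : ℚ) ^ j := by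
          rw [pow_succ, pow_succ]; ring
        rw [e1, map_neg] at ihj1
        rw [e2]
        have heq : z (j + 2) - C ((-1 : ℚ) ^ j) * iot m (hpoly (j + 2)) =
            g (j + 2) - X 0 * X 1 * (z j - C ((-1 : ℚ) ^ j) * iot m (hpoly j))
              - (X 0 + X 1) * (z (j + 1) - -C ((-1 : ℚ) ^ j) * iot m (hpoly (j + 1))) := by
          linear_combination (-1 : MvPolynomial (Fin (m + 2 + 1)) ℚ) * hg
            - C ((-1 : ℚ) ^ j) * hrec
        rw [heq]
        exact I.sub_mem (I.sub_mem (gmem (j + 2) (by omega) (by omega))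
          (I.mul_mem_left _ ihj)) (I.mul_mem_left _ ihj1)
  -- (-1)^k units
  have hCsq : ∀ k : ℕ, (C ((-1 : ℚ) ^ k) : MvPolynomial (Fin (m + 2 + 1)) ℚ)
      * C ((-1 : ℚ) ^ k) = 1 := by
    intro k
    rw [← map_mul, ← pow_add, ← two_mul, pow_mul]
    norm_num
  have hCsq2 : ∀ k : ℕ, (C ((-1 : ℚ) ^ k) : MvPolynomial (Fin 2) ℚ)
      * C ((-1 : ℚ) ^ k) = 1 := by
    intro k
    rw [← map_mul, ← pow_add, ← two_mul, pow_mul]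
    norm_num
  -- hpoly (m+2) images lie in I
  have keym := key m (by omega)
  have keym1 := key (m + 1) (by omega)
  have hHbn : iot m (hpoly (m + 2)) ∈ I := by
    have e1 : ((-1 : ℚ)) ^ (m + 1) = -(-1 : ℚ) ^ m := by rw [pow_succ]; ring
    have hrec := hHbrec m
    have h1 : -(C ((-1 : ℚ) ^ m)) * iot m (hpoly (m + 2)) =
        g (m + 2) - X 0 * X 1 * (z m - C ((-1 : ℚ) ^ m) * iot m (hpoly m))
          - (X 0 + X 1) * (z (m + 1) - -C ((-1 : ℚ) ^ m) * iot m (hpoly (m + 1))) := by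
      linear_combination (-1 : MvPolynomial (Fin (m + 2 + 1)) ℚ) * hgn
        - C ((-1 : ℚ) ^ m) * hrec
    have h2 : -(C ((-1 : ℚ) ^ m)) * iot m (hpoly (m + 2)) ∈ I := by
      rw [h1]
      refine I.sub_mem (I.sub_mem (gmem (m + 2) (by omega) (by omega))
        (I.mul_mem_left _ keym)) (I.mul_mem_left _ ?_)
      rw [e1, map_neg] at keym1
      exact keym1
    have h3 : iot m (hpoly (m + 2)) =
        -(C ((-1 : ℚ) ^ m)) * (-(C ((-1 : ℚ) ^ m)) * iot m (hpoly (m + 2))) := by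
      linear_combination (- iot m (hpoly (m + 2))) * hCsq m
    rw [h3]
    exact I.mul_mem_left _ h2
  have hHbn1 : X 0 * X 1 * iot m (hpoly (m + 1)) ∈ I := by
    have h1 : C ((-1 : ℚ) ^ (m + 1)) * (X 0 * X 1 * iot m (hpoly (m + 1))) =
        g (m + 2 + 1) - X 0 * X 1 *
          (z (m + 1) - C ((-1 : ℚ) ^ (m + 1)) * iot m (hpoly (m + 1))) := by
      linear_combination (-1 : MvPolynomial (Fin (m + 2 + 1)) ℚ) * hgn1
    have h2 : C ((-1 : ℚ) ^ (m + 1)) * (X 0 * X 1 * iot m (hpoly (m + 1))) ∈ I := by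
      rw [h1]
      exact I.sub_mem (gmem (m + 2 + 1) (by omega) (by omega)) (I.mul_mem_left _ keym1)
    have h3 : X 0 * X 1 * iot m (hpoly (m + 1)) =
        C ((-1 : ℚ) ^ (m + 1)) * (C ((-1 : ℚ) ^ (m + 1)) *
          (X 0 * X 1 * iot m (hpoly (m + 1)))) := by
      linear_combination (- (X 0 * X 1 * iot m (hpoly (m + 1)))) * hCsq (m + 1)
    rw [h3]
    exact I.mul_mem_left _ h2
  -- phi values on z
  have hphiz : ∀ k : ℕ, k ≤ m + 1 → phi m (z k) = C ((-1 : ℚ) ^ k) * hpoly k := by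
    intro k hk
    match k with
    | 0 => rw [hz0, map_one, hpoly_zero]; simp
    | (j + 1) =>
      rw [hz (j + 1) (by omega) (by omega) (by omega)]
      exact phi_Xk m (j + 1) (by omega) (by omega)
  -- the forward algebra hom
  have hIker : ∀ a ∈ I, ((Ideal.Quotient.mkₐ ℚ J).comp (phi m)) a = 0 := by
    intro a ha
    have hle : I ≤ RingHom.ker ((Ideal.Quotient.mkₐ ℚ J).comp (phi m)) := by
      rw [hI, Ideal.span_le]
      rintro x ⟨j, hj, rfl⟩
      rw [Set.mem_Icc] at hj
      rw [SetLike.mem_coe, RingHom.mem_ker]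
      show Ideal.Quotient.mk J (phi m (g j)) = 0
      rw [Ideal.Quotient.eq_zero_iff_mem]
      rcases eq_or_ne j (m + 2 + 1) with rfl | hj3
      · rw [hgn1, map_mul, map_mul, phi_X0, phi_X1, hphiz (m + 1) (by omega)]
        have heq : (X 0 : MvPolynomial (Fin 2) ℚ) * X 1 *
            (C ((-1 : ℚ) ^ (m + 1)) * hpoly (m + 1)) =
            C ((-1 : ℚ) ^ (m + 1)) * (X 0 * X 1 * hpoly (m + 1)) := by ring
        rw [heq]
        exact J.mul_mem_left _ (Ideal.subset_span (by simp))
      rcases eq_or_ne j (m + 2) with rfl | hj2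
      · rw [hgn]
        simp only [map_add, map_mul, phi_X0, phi_X1, hphiz m (by omega),
          hphiz (m + 1) (by omega)]
        have heq : (X 0 : MvPolynomial (Fin 2) ℚ) * X 1 * (C ((-1 : ℚ) ^ m) * hpoly m) +
            (X 0 + X 1) * (C ((-1 : ℚ) ^ (m + 1)) * hpoly (m + 1)) =
            (-C ((-1 : ℚ) ^ m)) * hpoly (m + 2) := by
          have e1 : ((-1 : ℚ)) ^ (m + 1) = -(-1 : ℚ) ^ m := by rw [pow_succ]; ring
          rw [e1, map_neg]
          linear_combination (C ((-1 : ℚ) ^ m) : MvPolynomial (Fin 2) ℚ) * hpoly_rec m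
        rw [heq]
        exact J.mul_mem_left _ (Ideal.subset_span (by simp))
      rcases eq_or_ne j 1 with rfl | hj1
      · rw [hg1]
        simp only [map_add, phi_X0, phi_X1, hphiz 1 (by omega), hpoly_one, pow_one,
          map_neg, map_one]
        have heq : (X 0 : MvPolynomial (Fin 2) ℚ) + X 1 + -1 * (X 0 + X 1) = 0 := by ring
        rw [heq]
        exact J.zero_mem
      · obtain ⟨i, rfl⟩ : ∃ i, j = i + 2 := ⟨j - 2, by omega⟩
        have hgj := hgk (i + 2) (by omega) (by omega)
        simp only [show i + 2 - 2 = i from rfl, show i + 2 - 1 = i + 1 from rfl] at hgj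
        rw [hgj]
        simp only [map_add, map_mul, phi_X0, phi_X1, hphiz i (by omega),
          hphiz (i + 1) (by omega), hphiz (i + 2) (by omega)]
        have heq : (X 0 : MvPolynomial (Fin 2) ℚ) * X 1 * (C ((-1 : ℚ) ^ i) * hpoly i) +
            (X 0 + X 1) * (C ((-1 : ℚ) ^ (i + 1)) * hpoly (i + 1)) +
            C ((-1 : ℚ) ^ (i + 2)) * hpoly (i + 2) = 0 := by
          have e1 : ((-1 : ℚ)) ^ (i + 1) = -(-1 : ℚ) ^ i := by rw [pow_succ]; ring
          have e2 : ((-1 : ℚ)) ^ (i + 2) = (-1 : ℚ) ^ i := by rw [pow_succ, pow_succ]; ring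
          rw [e1, e2, map_neg]
          linear_combination (C ((-1 : ℚ) ^ i) : MvPolynomial (Fin 2) ℚ) * hpoly_rec i
        rw [heq]
        exact J.zero_mem
    exact hle ha
  have hJker : ∀ a ∈ J, ((Ideal.Quotient.mkₐ ℚ I).comp (iot m)) a = 0 := by
    intro a ha
    have hle : J ≤ RingHom.ker ((Ideal.Quotient.mkₐ ℚ I).comp (iot m)) := by
      rw [hJ, Ideal.span_le]
      rintro x hx
      rw [SetLike.mem_coe, RingHom.mem_ker]
      rcases hx with rfl | hx
      · show Ideal.Quotient.mk I (iot m (hpoly (m + 2))) = 0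
        rw [Ideal.Quotient.eq_zero_iff_mem]
        exact hHbn
      · rw [Set.mem_singleton_iff] at hx
        subst hx
        show Ideal.Quotient.mk I (iot m (X 0 * X 1 * hpoly (m + 1))) = 0
        have hiotv : iot m (X 0 * X 1 * hpoly (m + 1)) =
            X 0 * X 1 * iot m (hpoly (m + 1)) := by
          rw [map_mul, map_mul, iot_X0, iot_X1]
        rw [hiotv, Ideal.Quotient.eq_zero_iff_mem]
        exact hHbn1
    exact hle ha
  set Φbar := Ideal.Quotient.liftₐ I ((Ideal.Quotient.mkₐ ℚ J).comp (phi m)) hIker with hΦbar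
  set Ψbar := Ideal.Quotient.liftₐ J ((Ideal.Quotient.mkₐ ℚ I).comp (iot m)) hJker with hΨbar
  have hΦmk : ∀ x, Φbar (Ideal.Quotient.mk I x) = Ideal.Quotient.mk J (phi m x) := by
    intro x
    rw [hΦbar, Ideal.Quotient.liftₐ_apply]
    rfl
  have hΨmk : ∀ x, Ψbar (Ideal.Quotient.mk J x) = Ideal.Quotient.mk I (iot m x) := by
    intro x
    rw [hΨbar, Ideal.Quotient.liftₐ_apply]
    rfl
  have h1 : Φbar.comp Ψbar = AlgHom.id ℚ _ := by
    apply Ideal.Quotient.algHom_ext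
    apply MvPolynomial.algHom_ext
    intro i
    simp only [AlgHom.comp_apply, Ideal.Quotient.mkₐ_eq_mk, AlgHom.id_apply]
    rw [hΨmk, hΦmk, phi_iot]
  have h2 : Ψbar.comp Φbar = AlgHom.id ℚ _ := by
    apply Ideal.Quotient.algHom_ext
    apply MvPolynomial.algHom_ext
    intro i
    simp only [AlgHom.comp_apply, Ideal.Quotient.mkₐ_eq_mk, AlgHom.id_apply]
    rw [hΦmk]
    rcases i with ⟨iv, hiv⟩
    match iv, hiv with
    | 0, hiv =>
      rw [show phi m (X (⟨0, hiv⟩ : Fin (m + 2 + 1))) = X 0 by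
        rw [phi, aeval_X]; exact if_pos rfl]
      rw [hΨmk, iot_X0, Fin.mk_zero]
    | 1, hiv =>
      rw [show phi m (X (⟨1, hiv⟩ : Fin (m + 2 + 1))) = X 1 by
        rw [phi, aeval_X]; rw [show fmap m ⟨1, hiv⟩ =
          if (1 : ℕ) = 0 then X 0 else if (1 : ℕ) = 1 then X 1
            else C ((-1 : ℚ) ^ (1 - 1)) * hpoly (1 - 1) from rfl]; simp]
      rw [hΨmk, iot_X1, Fin.mk_one]
    | (k + 2), hiv =>
      have hfk : phi m (X (⟨k + 2, hiv⟩ : Fin (m + 2 + 1))) =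
          C ((-1 : ℚ) ^ (k + 1)) * hpoly (k + 1) := by
        rw [phi, aeval_X, fmap]
        rw [if_neg (show ¬(k + 2 = 0) by omega), if_neg (show ¬(k + 2 = 1) by omega)]
        rfl
      rw [hfk, hΨmk, map_mul, iot_C]
      have hzv := hz (k + 1) (by omega) (by omega) hiv
      rw [show X (⟨k + 2, hiv⟩ : Fin (m + 2 + 1)) = z (k + 1) from hzv.symm]
      exact ((Ideal.Quotient.eq).2 (key (k + 1) (by omega))).symm
  refine ⟨AlgEquiv.ofAlgHom Φbar Ψbar h1 h2, ?_, ?_, ?_⟩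
  · show Φbar (Ideal.Quotient.mk I (X 0)) = _
    rw [hΦmk, phi_X0]
    rfl
  · show Φbar (Ideal.Quotient.mk I (X 1)) = _
    rw [hΦmk, phi_X1]
    rfl
  · intro k hk1 hk2
    show Φbar (Ideal.Quotient.mk I (z k)) = _
    rw [hΦmk, hphiz k (by omega)]
    rfl
end

section
/- Let n ≥ 2. The ℚ-algebra homomorphism ℚ[a, b] → ℚ[x, y] defined by a ↦ (−1)^{n+1}·x and b ↦ (−1)^{n+1}·y descends to a well-defined ℚ-algebra isomorphism ℚ[a, b] / ( (−1)^{n+1}·h_n(a, b), (−1)^{n+1}·a·b·h_{n−1}(a, b) ) ≅ ℚ[x, y] / ( h_n(x, y), y^{n+1} ). (This is the cohomology-level content of the theorem that the projectivization P(E) of the tangent bundle of ℂP^n has the rational homotopy type of U(n+1)/(U(1) × U(1) × U(n−1)): the left-hand side is H^*(U(n+1)/(U(1) × U(1) × U(n−1)); ℚ) and the right-hand side is H^*(P(E); ℚ).) -/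
open MvPolynomial

lemma aeval_hpoly (c : ℚ) (k : ℕ) :
    aeval ![C c * X 0, C c * X 1] (hpoly k) = C (c ^ k) * hpoly k := by
  unfold hpoly
  rw [map_sum, Finset.mul_sum]
  refine Finset.sum_congr rfl fun i hi => ?_
  rw [Finset.mem_range, Nat.lt_succ_iff] at hi
  have h : k - i + i = k := Nat.sub_add_cancel hi
  simp only [map_mul, map_pow, aeval_X, Matrix.cons_val_zero, Matrix.cons_val_one,
    Matrix.head_cons]
  rw [mul_pow, mul_pow, show (C c : MvPolynomial (Fin 2) ℚ) ^ (k - i) * X 0 ^ (k - i) *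
      (C c ^ i * X 1 ^ i) = C c ^ (k - i) * C c ^ i * (X 0 ^ (k - i) * X 1 ^ i) from by ring,
    ← pow_add, h]

/-- For `n ≥ 2`, the `ℚ`-algebra map `ℚ[a, b] → ℚ[x, y]`, `a ↦ (-1)^{n+1}·x`,
`b ↦ (-1)^{n+1}·y`, descends to a `ℚ`-algebra isomorphism
`ℚ[a, b]/((-1)^{n+1}·h_n(a,b), (-1)^{n+1}·a·b·h_{n-1}(a,b)) ≃ ℚ[x, y]/(h_n(x,y), y^{n+1})`. -/
theorem quotient_algEquiv_of_sign_map (n : ℕ) (hn : 2 ≤ n) :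
    ∃ e : (MvPolynomial (Fin 2) ℚ ⧸
            Ideal.span {C ((-1 : ℚ) ^ (n + 1)) * hpoly n,
              C ((-1 : ℚ) ^ (n + 1)) * (X 0 * X 1 * hpoly (n - 1))}) ≃ₐ[ℚ]
          (MvPolynomial (Fin 2) ℚ ⧸
            Ideal.span {hpoly n, (X 1 : MvPolynomial (Fin 2) ℚ) ^ (n + 1)}),
      ∀ p : MvPolynomial (Fin 2) ℚ,
        e (Ideal.Quotient.mk _ p) =
          Ideal.Quotient.mk _
            (aeval ![C ((-1 : ℚ) ^ (n + 1)) * X 0, C ((-1 : ℚ) ^ (n + 1)) * X 1] p) := by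
  have hn1 : n - 1 + 1 = n := by omega
  set c : ℚ := (-1 : ℚ) ^ (n + 1) with hc
  have hc2 : c * c = 1 := by
    rw [hc, ← pow_add]
    exact Even.neg_one_pow ⟨n + 1, rfl⟩
  have hcn : c ^ n = 1 := by
    rw [hc, ← pow_mul]
    exact Even.neg_one_pow (by rw [Nat.mul_comm]; exact Nat.even_mul_succ_self n)
  set φ : MvPolynomial (Fin 2) ℚ →ₐ[ℚ] MvPolynomial (Fin 2) ℚ :=
    aeval ![C c * X 0, C c * X 1] with hφ
  have hφφ : φ.comp φ = AlgHom.id ℚ _ := by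
    apply MvPolynomial.algHom_ext
    intro i
    fin_cases i <;> simp [hφ, ← mul_assoc, ← C_mul, hc2]
  set σ : MvPolynomial (Fin 2) ℚ ≃ₐ[ℚ] MvPolynomial (Fin 2) ℚ :=
    AlgEquiv.ofAlgHom φ φ hφφ hφφ with hσ
  have hkey : X 0 * X 1 * hpoly (n - 1) = X 1 * hpoly n - X 1 ^ (n + 1) := by
    have h := hpoly_succ (n - 1)
    rw [hn1] at h
    rw [h]; ring
  have hg1 : σ (C c * hpoly n) = C c * hpoly n := by
    show φ (C c * hpoly n) = _
    rw [map_mul, aeval_C, aeval_hpoly, hcn]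
    simp [algebraMap_eq]
  have hg2 : σ (C c * (X 0 * X 1 * hpoly (n - 1))) = X 0 * X 1 * hpoly (n - 1) := by
    show φ (C c * (X 0 * X 1 * hpoly (n - 1))) = _
    simp only [hφ, map_mul, aeval_C, aeval_X, Matrix.cons_val_zero, Matrix.cons_val_one,
      Matrix.head_cons, aeval_hpoly, algebraMap_eq]
    rw [show (C c : MvPolynomial (Fin 2) ℚ) *
          (C c * X 0 * (C c * X 1) * (C (c ^ (n - 1)) * hpoly (n - 1)))
        = C (c * c) * (C (c * c ^ (n - 1)) * (X 0 * X 1 * hpoly (n - 1))) by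
          rw [C_mul, C_mul]; ring,
      hc2, ← pow_succ', hn1, hcn]
    simp
  have hmap : Ideal.span {hpoly n, (X 1 : MvPolynomial (Fin 2) ℚ) ^ (n + 1)} =
      (Ideal.span {C c * hpoly n, C c * (X 0 * X 1 * hpoly (n - 1))}).map
        (σ : MvPolynomial (Fin 2) ℚ →+* MvPolynomial (Fin 2) ℚ) := by
    rw [Ideal.map_span, Set.image_insert_eq, Set.image_singleton]
    show _ = Ideal.span {σ _, σ _}
    rw [hg1, hg2]
    apply le_antisymm <;> rw [Ideal.span_le] <;> rintro p hp <;>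
      simp only [Set.mem_insert_iff, Set.mem_singleton_iff] at hp <;>
        rcases hp with rfl | rfl <;> rw [SetLike.mem_coe, Ideal.mem_span_pair]
    · exact ⟨C c, 0, by rw [← mul_assoc, ← C_mul, hc2]; simp⟩
    · refine ⟨X 1 * C c, -1, ?_⟩
      rw [hkey, show X 1 * C c * (C c * hpoly n) = C (c * c) * (X 1 * hpoly n) by
        rw [C_mul]; ring, hc2, C_1]
      ring
    · exact ⟨C c, 0, by simp⟩
    · exact ⟨X 1, -1, by rw [hkey]; ring⟩
  exact ⟨Ideal.quotientEquivAlg _ _ σ hmap, fun p => rfl⟩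
end
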